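/- Let w ∈ W be commutative (in the simply-laced case, equivalently: (γ, γ′) ≥ 0 for all γ, γ′ ∈ N(w)) and let w′ be a left factor of w (i.e., w = w′w″ with ℓ(w) = ℓ(w′) + ℓ(w″)). Then for every γ′ ∈ N(w′) there exists γ ∈ N(w) with γ′ ≼ γ. -/

import Mathlib

open scoped RealInnerProductSpace

/-- Data of a crystallographic root system in a real inner product space `V`,
with simple roots indexed by a finite type `ι`. -/
structure RSD (ι V : Type*) [Fintype ι] [NormedAddCommGroup V]
    [InnerProductSpace ℝ V] where
  /-- The simple roots. -/
  sroot : ι → V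
  /-- The set of roots. -/
  Δ : Set V
  finite : Δ.Finite
  zero_not_mem : (0 : V) ∉ Δ
  sroot_mem : ∀ i, sroot i ∈ Δ
  sroot_indep : LinearIndependent ℝ sroot
  neg_mem : ∀ a ∈ Δ, -a ∈ Δ
  /-- Crystallographic condition. -/
  crys : ∀ a ∈ Δ, ∀ b ∈ Δ, ∃ n : ℤ, 2 * ⟪a, b⟫ / ⟪a, a⟫ = (n : ℝ)
  /-- The reflection associated with a vector (only specified on roots). -/
  reflect : V → (V ≃ₗ[ℝ] V)
  reflect_apply : ∀ a ∈ Δ, ∀ v : V,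
    reflect a v = v - (2 * ⟪a, v⟫ / ⟪a, a⟫) • a
  reflect_root_mem : ∀ a ∈ Δ, ∀ b ∈ Δ, reflect a b ∈ Δ
  /-- Every root is a nonnegative or nonpositive integral combination of simple roots. -/
  decomp : ∀ a ∈ Δ, (∃ c : ι → ℕ, a = ∑ i, (c i : ℝ) • sroot i) ∨
      (∃ c : ι → ℕ, a = -∑ i, (c i : ℝ) • sroot i)
  /-- Irreducibility. -/
  irred : ∀ S T : Set V, S ∪ T = Δ → (∀ a ∈ S, ∀ b ∈ T, ⟪a, b⟫ = 0) →
      S = ∅ ∨ T = ∅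

namespace RSD

variable {ι V : Type*} [Fintype ι] [NormedAddCommGroup V] [InnerProductSpace ℝ V]
  (R : RSD ι V)

/-- The set of positive roots. -/
def pos : Set V := {a ∈ R.Δ | ∃ c : ι → ℕ, a = ∑ i, (c i : ℝ) • R.sroot i}

/-- `R.le μ γ` means `μ ≼ γ`, i.e. `γ - μ` is a nonnegative integral combination
of simple roots. -/
def le (μ γ : V) : Prop := ∃ c : ι → ℕ, γ - μ = ∑ i, (c i : ℝ) • R.sroot i

/-- The Weyl group, generated by the simple reflections. -/
def W : Subgroup (V ≃ₗ[ℝ] V) :=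
  Subgroup.closure (Set.range fun i => R.reflect (R.sroot i))

/-- The inversion set `N(w) = {γ ∈ Δ⁺ ∣ w γ ∈ -Δ⁺}`. -/
def N (w : V ≃ₗ[ℝ] V) : Set V := {γ ∈ R.pos | -(w γ) ∈ R.pos}

/-- The length of `w`: minimal length of an expression of `w` as a product of
simple reflections. -/
noncomputable def len (w : V ≃ₗ[ℝ] V) : ℕ :=
  sInf {n | ∃ l : List ι, l.length = n ∧
    (l.map fun i => R.reflect (R.sroot i)).prod = w}

/-- The coroot `a∨ = 2a/(a,a)`. -/
@[nolint unusedArguments]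
noncomputable def coroot (_R : RSD ι V) (a : V) : V := (2 / ⟪a, a⟫) • a

/-- `ρ`, the half-sum of the positive roots. -/
noncomputable def rho : V :=
  (2⁻¹ : ℝ) • ∑ a ∈ (R.finite.subset (fun a ha => ha.1 : R.pos ⊆ R.Δ)).toFinset, a

/-- `R.HtIs γ n` : the height of `γ` is `n`. -/
def HtIs (γ : V) (n : ℕ) : Prop :=
  ∃ c : ι → ℕ, γ = ∑ i, (c i : ℝ) • R.sroot i ∧ ∑ i, c i = n

/-- A long root: a root of maximal squared length. -/
def IsLong (γ : V) : Prop := γ ∈ R.Δ ∧ ∀ b ∈ R.Δ, ⟪b, b⟫ ≤ ⟪γ, γ⟫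

/-- The highest root. -/
def IsHighest (θ : V) : Prop := θ ∈ R.pos ∧ ∀ γ ∈ R.pos, R.le γ θ

/-- Simply-laced: all roots have the same length. -/
def SimplyLaced : Prop := ∀ a ∈ R.Δ, ∀ b ∈ R.Δ, ⟪a, a⟫ = ⟪b, b⟫

/-- A minimal inversion complete set. -/
def IsMICS (F : Set (V ≃ₗ[ℝ] V)) : Prop :=
  (∀ w ∈ F, w ∈ R.W) ∧ (⋃ w ∈ F, R.N w) = R.pos ∧
    ∀ F' ⊂ F, (⋃ w ∈ F', R.N w) ≠ R.pos

end RSD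

namespace RSD

variable {ι V : Type*} [Fintype ι] [NormedAddCommGroup V] [InnerProductSpace ℝ V]
  (R : RSD ι V)

/-- Product of simple reflections along a list. -/
def P (l : List ι) : V ≃ₗ[ℝ] V := (l.map fun i => R.reflect (R.sroot i)).prod

lemma P_nil : R.P ([] : List ι) = 1 := rfl

lemma P_cons (i : ι) (l : List ι) :
    R.P (i :: l) = R.reflect (R.sroot i) * R.P l := by
  simp [P]

lemma P_singleton (i : ι) : R.P [i] = R.reflect (R.sroot i) := by
  simp [P]

lemma P_append (l₁ l₂ : List ι) : R.P (l₁ ++ l₂) = R.P l₁ * R.P l₂ := by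
  simp [P]

lemma sroot_ne_zero (i : ι) : R.sroot i ≠ 0 := R.sroot_indep.ne_zero i

lemma inner_self_pos' {a : V} (ha : a ∈ R.Δ) : 0 < ⟪a, a⟫ := by
  have h0 : a ≠ 0 := fun h0 => R.zero_not_mem (h0 ▸ ha)
  have h1 : ‖a‖ ≠ 0 := norm_ne_zero_iff.2 h0
  rw [real_inner_self_eq_norm_sq]
  positivity

lemma reflect_inner {a : V} (ha : a ∈ R.Δ) (u v : V) :
    ⟪R.reflect a u, R.reflect a v⟫ = ⟪u, v⟫ := by
  have h := (R.inner_self_pos' ha).ne'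
  rw [R.reflect_apply a ha u, R.reflect_apply a ha v]
  simp only [inner_sub_left, inner_sub_right, real_inner_smul_left, real_inner_smul_right,
    real_inner_comm a u, real_inner_comm a v]
  field_simp
  ring

lemma reflect_invol {a : V} (ha : a ∈ R.Δ) (v : V) :
    R.reflect a (R.reflect a v) = v := by
  have h := (R.inner_self_pos' ha).ne'
  rw [R.reflect_apply a ha v, R.reflect_apply a ha, inner_sub_right, real_inner_smul_right]
  field_simp
  module

lemma reflect_inv {a : V} (ha : a ∈ R.Δ) : (R.reflect a)⁻¹ = R.reflect a := by
  apply inv_eq_of_mul_eq_one_left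
  ext v
  exact R.reflect_invol ha v

lemma reflect_self {a : V} (ha : a ∈ R.Δ) : R.reflect a a = -a := by
  have h := (R.inner_self_pos' ha).ne'
  rw [R.reflect_apply a ha a]
  have : 2 * ⟪a, a⟫ / ⟪a, a⟫ = 2 := by field_simp
  rw [this]
  module

lemma P_maps (l : List ι) {a : V} (ha : a ∈ R.Δ) : R.P l a ∈ R.Δ := by
  induction l with
  | nil => exact ha
  | cons i t ih =>
      rw [P_cons]
      exact R.reflect_root_mem _ (R.sroot_mem i) _ ih

lemma P_inner (l : List ι) (u v : V) : ⟪R.P l u, R.P l v⟫ = ⟪u, v⟫ := by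
  induction l with
  | nil => rfl
  | cons i t ih =>
      rw [P_cons]
      show ⟪R.reflect (R.sroot i) (R.P t u), R.reflect (R.sroot i) (R.P t v)⟫ = _
      rw [R.reflect_inner (R.sroot_mem i), ih]

lemma P_mem_W (l : List ι) : R.P l ∈ R.W := by
  induction l with
  | nil => exact one_mem _
  | cons i t ih =>
      rw [P_cons]
      exact mul_mem (Subgroup.subset_closure ⟨i, rfl⟩) ih

lemma P_reverse (l : List ι) : R.P l.reverse = (R.P l)⁻¹ := by
  induction l with
  | nil => simp [P_nil]
  | cons i t ih =>
      rw [List.reverse_cons, P_append, ih, P_singleton, P_cons, mul_inv_rev,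
        R.reflect_inv (R.sroot_mem i)]

lemma P_inv_inner (l : List ι) (u v : V) :
    ⟪((R.P l)⁻¹ : V ≃ₗ[ℝ] V) u, ((R.P l)⁻¹ : V ≃ₗ[ℝ] V) v⟫ = ⟪u, v⟫ := by
  rw [← P_reverse, P_inner]

lemma exists_word {w : V ≃ₗ[ℝ] V} (hw : w ∈ R.W) : ∃ l : List ι, R.P l = w := by
  induction hw using Subgroup.closure_induction with
  | mem x hx =>
      obtain ⟨i, rfl⟩ := hx
      exact ⟨[i], R.P_singleton i⟩
  | one => exact ⟨[], rfl⟩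
  | mul x y _ _ hx hy =>
      obtain ⟨l₁, rfl⟩ := hx
      obtain ⟨l₂, rfl⟩ := hy
      exact ⟨l₁ ++ l₂, R.P_append l₁ l₂⟩
  | inv x _ hx =>
      obtain ⟨l, rfl⟩ := hx
      exact ⟨l.reverse, R.P_reverse l⟩

lemma len_le (l : List ι) : R.len (R.P l) ≤ l.length :=
  Nat.sInf_le ⟨l, rfl, rfl⟩

lemma exists_reduced {w : V ≃ₗ[ℝ] V} (hw : w ∈ R.W) :
    ∃ l : List ι, R.P l = w ∧ l.length = R.len w := by
  obtain ⟨l, hl⟩ := R.exists_word hw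
  have hne : {n | ∃ l : List ι, l.length = n ∧
      (l.map fun i => R.reflect (R.sroot i)).prod = w}.Nonempty :=
    ⟨l.length, l, rfl, hl⟩
  obtain ⟨l', h1, h2⟩ := Nat.sInf_mem hne
  exact ⟨l', h2, h1⟩

lemma len_mul_P_le {w : V ≃ₗ[ℝ] V} (hw : w ∈ R.W) (t : List ι) :
    R.len (w * R.P t) ≤ R.len w + t.length := by
  obtain ⟨l, hl, hlen⟩ := R.exists_reduced hw
  calc R.len (w * R.P t) = R.len (R.P (l ++ t)) := by rw [P_append, hl]
    _ ≤ (l ++ t).length := R.len_le _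
    _ = R.len w + t.length := by rw [List.length_append, hlen]

lemma pos_or_neg {a : V} (ha : a ∈ R.Δ) : a ∈ R.pos ∨ -a ∈ R.pos := by
  rcases R.decomp a ha with ⟨c, hc⟩ | ⟨c, hc⟩
  · exact Or.inl ⟨ha, c, hc⟩
  · exact Or.inr ⟨R.neg_mem a ha, c, by rw [hc, neg_neg]⟩

lemma coeff_eq {c d : ι → ℝ}
    (h : ∑ i, c i • R.sroot i = ∑ i, d i • R.sroot i) : ∀ i, c i = d i := by
  have h0 : ∑ i, (c i - d i) • R.sroot i = 0 := by
    simp only [sub_smul, Finset.sum_sub_distrib, h, sub_self]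
  intro i
  have := Fintype.linearIndependent_iff.1 R.sroot_indep _ h0 i
  linarith

lemma not_pos_neg {a : V} (h1 : a ∈ R.pos) (h2 : -a ∈ R.pos) : False := by
  obtain ⟨haΔ, c, hc⟩ := h1
  obtain ⟨-, d, hd⟩ := h2
  have hsum : ∑ i, ((c i : ℝ) + (d i : ℝ)) • R.sroot i = ∑ i, (0 : ℝ) • R.sroot i := by
    simp only [add_smul, Finset.sum_add_distrib, ← hc, ← hd, add_neg_cancel,
      zero_smul, Finset.sum_const_zero]
  have hz := R.coeff_eq hsum
  have hc0 : ∀ i, (c i : ℝ) = 0 := by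
    intro i
    have := hz i
    have h1 : (0:ℝ) ≤ (c i : ℝ) := Nat.cast_nonneg _
    have h2 : (0:ℝ) ≤ (d i : ℝ) := Nat.cast_nonneg _
    linarith
  have : a = 0 := by
    rw [hc]
    refine Finset.sum_eq_zero fun i _ => ?_
    rw [hc0 i, zero_smul]
  exact R.zero_not_mem (this ▸ haΔ)

lemma sroot_pos (i : ι) : R.sroot i ∈ R.pos := by
  classical
  refine ⟨R.sroot_mem i, fun j => if j = i then 1 else 0, ?_⟩
  rw [Finset.sum_eq_single i]
  · simp
  · intro j _ hj; simp [hj]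
  · intro h; exact absurd (Finset.mem_univ i) h

/-- A simple reflection permutes the positive roots other than its own root. -/
lemma reflect_pos (hsl : R.SimplyLaced) {i : ι} {β : V}
    (hβ : β ∈ R.pos) (hne : β ≠ R.sroot i) :
    R.reflect (R.sroot i) β ∈ R.pos := by
  classical
  obtain ⟨hβΔ, c, hc⟩ := hβ
  have hiΔ := R.sroot_mem i
  obtain ⟨k, hk⟩ := R.crys _ hiΔ β hβΔ
  have hii := R.inner_self_pos' hiΔ
  have hrefl : R.reflect (R.sroot i) β = β - (k : ℝ) • R.sroot i := by
    rw [R.reflect_apply _ hiΔ β, hk]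
  -- there is some j ≠ i with c j ≥ 1
  have hcj : ∃ j, j ≠ i ∧ 1 ≤ c j := by
    by_contra hco
    push_neg at hco
    have hβi : β = (c i : ℝ) • R.sroot i := by
      rw [hc, Finset.sum_eq_single i]
      · intro j _ hj
        have : c j = 0 := Nat.lt_one_iff.1 (hco j hj)
        rw [this]; simp
      · intro h; exact absurd (Finset.mem_univ i) h
    have hlen : ⟪β, β⟫ = ⟪R.sroot i, R.sroot i⟫ := hsl _ hβΔ _ hiΔ
    rw [hβi, real_inner_smul_left, real_inner_smul_right] at hlen
    have hci1 : (c i : ℝ) = 1 := by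
      have h3 : (((c i:ℝ)) - 1) * (((c i:ℝ)) + 1) * ⟪R.sroot i, R.sroot i⟫ = 0 := by
        linear_combination hlen
      have h4 : (0:ℝ) ≤ (c i : ℝ) := Nat.cast_nonneg _
      rcases mul_eq_zero.1 h3 with h5 | h5
      · rcases mul_eq_zero.1 h5 with h6 | h6
        · linarith
        · linarith
      · exact absurd h5 hii.ne'
    exact hne (by rw [hβi, hci1, one_smul])
  rcases R.pos_or_neg (R.reflect_root_mem _ hiΔ β hβΔ) with h | h
  · exact h
  · exfalso
    obtain ⟨-, d, hd⟩ := h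
    rw [hrefl] at hd
    -- hd : -(β - k • αi) = ∑ d j • αj
    have hsum : ∑ j, ((c j : ℝ) + (d j : ℝ) - (if j = i then (k:ℝ) else 0)) • R.sroot j
        = ∑ j, (0:ℝ) • R.sroot j := by
      simp only [sub_smul, add_smul, Finset.sum_sub_distrib, Finset.sum_add_distrib,
        ← hc, ← hd, zero_smul, Finset.sum_const_zero]
      rw [Finset.sum_eq_single i]
      · simp only [if_pos rfl, ↓reduceIte]
        abel
      · intro j _ hj; simp [hj]
      · intro h; exact absurd (Finset.mem_univ i) h
    obtain ⟨j, hji, hcj1⟩ := hcj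
    have := R.coeff_eq hsum j
    rw [if_neg hji] at this
    have h1 : (1:ℝ) ≤ (c j : ℝ) := by exact_mod_cast hcj1
    have h2 : (0:ℝ) ≤ (d j : ℝ) := Nat.cast_nonneg _
    linarith

lemma reflect_conj (l : List ι) {a : V} (ha : a ∈ R.Δ) :
    R.reflect (R.P l a) = R.P l * R.reflect a * (R.P l)⁻¹ := by
  have hmem : R.P l a ∈ R.Δ := R.P_maps l ha
  ext v
  have hinv : R.P l (((R.P l)⁻¹ : V ≃ₗ[ℝ] V) v) = v := by
    show R.P l ((R.P l).symm v) = v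
    exact LinearEquiv.apply_symm_apply _ _
  have h1 : ⟪R.P l a, v⟫ = ⟪a, ((R.P l)⁻¹ : V ≃ₗ[ℝ] V) v⟫ := by
    conv_lhs => rw [← hinv]
    rw [P_inner]
  have h2 := R.P_inner l a a
  rw [R.reflect_apply _ hmem v]
  show _ = R.P l (R.reflect a (((R.P l)⁻¹ : V ≃ₗ[ℝ] V) v))
  rw [R.reflect_apply a ha, map_sub, map_smul, hinv, h1, h2]

/-- Exchange-type lemma: if a word sends a simple root to a negative root, the
word times that simple reflection has a shorter expression. -/
lemma exchange (hsl : R.SimplyLaced) :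
    ∀ l : List ι, ∀ i : ι, -(R.P l (R.sroot i)) ∈ R.pos →
    ∃ l' : List ι, R.P l' = R.P l * R.reflect (R.sroot i) ∧ l'.length < l.length + 1 := by
  intro l
  induction l with
  | nil =>
      intro i h
      exfalso
      exact R.not_pos_neg (R.sroot_pos i) (by simpa [P_nil] using h)
  | cons j t ih =>
      intro i h
      have hPt : R.P (j :: t) (R.sroot i) = R.reflect (R.sroot j) (R.P t (R.sroot i)) := by
        rw [P_cons]; rfl
      rcases R.pos_or_neg (R.P_maps t (R.sroot_mem i)) with hp | hn
      · -- P t αi positive, forced to equal α j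
        have heq : R.P t (R.sroot i) = R.sroot j := by
          by_contra hne
          exact R.not_pos_neg (R.reflect_pos hsl hp hne) (by rwa [← hPt])
        have hconj := R.reflect_conj t (R.sroot_mem i)
        rw [heq] at hconj
        -- reflect αj = P t * reflect αi * (P t)⁻¹
        have hs2 : R.reflect (R.sroot i) * R.reflect (R.sroot i) = 1 := by
          nth_rewrite 2 [← R.reflect_inv (R.sroot_mem i)]
          group
        refine ⟨t, ?_, by simp only [List.length_cons]; omega⟩
        rw [P_cons, hconj]
        group
        rw [mul_assoc, hs2, mul_one]
      · obtain ⟨l', hl', hlen⟩ := ih i hn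
        refine ⟨j :: l', ?_, by simpa [List.length_cons] using Nat.succ_lt_succ hlen⟩
        rw [P_cons, hl', P_cons, mul_assoc]

lemma pos_of_len_add_one (hsl : R.SimplyLaced) {w : V ≃ₗ[ℝ] V} (hw : w ∈ R.W) (i : ι)
    (hlen : R.len w + 1 ≤ R.len (w * R.reflect (R.sroot i))) :
    w (R.sroot i) ∈ R.pos := by
  obtain ⟨l, hl, hllen⟩ := R.exists_reduced hw
  rcases R.pos_or_neg (hl ▸ R.P_maps l (R.sroot_mem i)) with h | h
  · exact h
  · exfalso
    obtain ⟨l', hl', hl'len⟩ := R.exchange hsl l i (by rwa [hl])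
    have h1 : R.len (w * R.reflect (R.sroot i)) ≤ l'.length := by
      rw [← hl, ← hl']
      exact R.len_le l'
    omega

lemma le_refl' (γ : V) : R.le γ γ := ⟨0, by simp⟩

lemma le_trans' {a b c : V} (h1 : R.le a b) (h2 : R.le b c) : R.le a c := by
  obtain ⟨u, hu⟩ := h1
  obtain ⟨v, hv⟩ := h2
  refine ⟨u + v, ?_⟩
  have : c - a = (c - b) + (b - a) := by abel
  rw [this, hu, hv]
  push_cast
  simp [add_smul, Finset.sum_add_distrib]
  abel

/-- Transport: inversions of a left factor, pulled back by the right factor,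
are inversions of the product. -/
lemma step1 (hsl : R.SimplyLaced) :
    ∀ (t : List ι) (a : V ≃ₗ[ℝ] V), a ∈ R.W →
    R.len (a * R.P t) = R.len a + t.length →
    ∀ γ ∈ R.N a, ((R.P t)⁻¹ : V ≃ₗ[ℝ] V) γ ∈ R.N (a * R.P t) := by
  intro t
  induction t with
  | nil =>
      intro a _ _ γ hγ
      simpa [P_nil] using hγ
  | cons j r ih =>
      intro a ha hlen γ hγ
      set sj := R.reflect (R.sroot j) with hsj
      have hstep : a * R.P (j :: r) = (a * sj) * R.P r := by
        rw [P_cons, mul_assoc]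
      have hsub : R.len ((a * sj) * R.P r) ≤ R.len (a * sj) + r.length :=
        R.len_mul_P_le (mul_mem ha (Subgroup.subset_closure ⟨j, rfl⟩)) r
      have hsub2 : R.len (a * sj) ≤ R.len a + 1 := by
        have := R.len_mul_P_le ha [j]
        rwa [P_singleton, List.length_singleton] at this
      have hlen1 : R.len (a * sj) = R.len a + 1 := by
        rw [hstep] at hlen
        simp only [List.length_cons] at hlen
        omega
      have hαpos : a (R.sroot j) ∈ R.pos := by
        apply R.pos_of_len_add_one hsl ha j
        rw [← hsj, hlen1]
      obtain ⟨hγpos, hγneg⟩ := hγ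
      have hγne : γ ≠ R.sroot j := by
        rintro rfl
        exact R.not_pos_neg hαpos hγneg
      have hsjγ : sj γ ∈ R.pos := R.reflect_pos hsl hγpos hγne
      have hmem : sj γ ∈ R.N (a * sj) := by
        refine ⟨hsjγ, ?_⟩
        have : (a * sj) (sj γ) = a γ := by
          show a (sj (sj γ)) = a γ
          rw [R.reflect_invol (R.sroot_mem j)]
        rwa [this]
      have hlen2 : R.len ((a * sj) * R.P r) = R.len (a * sj) + r.length := by
        rw [← hstep, hlen, hlen1]
        simp [List.length_cons]
        omega
      have := ih (a * sj) (mul_mem ha (Subgroup.subset_closure ⟨j, rfl⟩)) hlen2 (sj γ) hmem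
      rw [← hstep] at this
      have hrw : ((R.P (j :: r))⁻¹ : V ≃ₗ[ℝ] V) γ = ((R.P r)⁻¹ : V ≃ₗ[ℝ] V) (sj γ) := by
        rw [P_cons, mul_inv_rev, ← hsj, R.reflect_inv (R.sroot_mem j)]
        rfl
      rwa [hrw]

/-- Main induction for Statement 5. -/
lemma step2 (hsl : R.SimplyLaced) (w : V ≃ₗ[ℝ] V)
    (hcomm : ∀ γ ∈ R.N w, ∀ γ' ∈ R.N w, 0 ≤ ⟪γ, γ'⟫) :
    ∀ (t : List ι) (w' : V ≃ₗ[ℝ] V), w' ∈ R.W →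
    w = w' * R.P t → R.len w = R.len w' + t.length →
    ∀ γ' ∈ R.N w', ∃ γ ∈ R.N w, R.le γ' γ := by
  intro t
  induction t with
  | nil =>
      intro w' _ hfac _ γ' hγ'
      refine ⟨γ', ?_, R.le_refl' γ'⟩
      rw [hfac, P_nil, mul_one]
      exact hγ'
  | cons j r ih =>
      intro w' hw' hfac hlen γ' hγ'
      set sj := R.reflect (R.sroot j) with hsj
      have hjW : sj ∈ R.W := Subgroup.subset_closure ⟨j, rfl⟩
      have hstep : w = (w' * sj) * R.P r := by
        rw [hfac, P_cons, mul_assoc]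
      have hsub : R.len ((w' * sj) * R.P r) ≤ R.len (w' * sj) + r.length :=
        R.len_mul_P_le (mul_mem hw' hjW) r
      have hsub2 : R.len (w' * sj) ≤ R.len w' + 1 := by
        have := R.len_mul_P_le hw' [j]
        rwa [P_singleton, List.length_singleton] at this
      have hlen1 : R.len (w' * sj) = R.len w' + 1 := by
        rw [hstep] at hlen
        simp only [List.length_cons] at hlen
        omega
      have hlen2 : R.len w = R.len (w' * sj) + r.length := by
        rw [hlen, hlen1]
        simp only [List.length_cons]
        omega
      have hαpos : w' (R.sroot j) ∈ R.pos := by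
        apply R.pos_of_len_add_one hsl hw' j
        rw [← hsj, hlen1]
      obtain ⟨hγ'pos, hγ'neg⟩ := hγ'
      have hγ'ne : γ' ≠ R.sroot j := by
        rintro rfl
        exact R.not_pos_neg hαpos hγ'neg
      have hsjγ' : sj γ' ∈ R.pos := R.reflect_pos hsl hγ'pos hγ'ne
      have hmem : sj γ' ∈ R.N (w' * sj) := by
        refine ⟨hsjγ', ?_⟩
        have : (w' * sj) (sj γ') = w' γ' := by
          show w' (sj (sj γ')) = w' γ'
          rw [R.reflect_invol (R.sroot_mem j)]
        rwa [this]
      have hjΔ := R.sroot_mem j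
      have hii := R.inner_self_pos' hjΔ
      obtain ⟨k, hk⟩ := R.crys _ hjΔ γ' hγ'pos.1
      have hγ₁ : sj γ' = γ' - (k : ℝ) • R.sroot j := by
        rw [hsj, R.reflect_apply _ hjΔ γ', hk]
      classical
      by_cases hk0 : k ≤ 0
      · -- γ' ≼ sj γ'
        have hle : R.le γ' (sj γ') := by
          refine ⟨fun m => if m = j then (-k).toNat else 0, ?_⟩
          have hcast : (((-k).toNat : ℕ) : ℝ) = -(k : ℝ) := by
            have h5 : ((-k).toNat : ℤ) = -k := Int.toNat_of_nonneg (by omega)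
            exact_mod_cast h5
          have hsum : ∀ m : ι, (((if m = j then (-k).toNat else 0 : ℕ)) : ℝ) • R.sroot m
              = (if m = j then (-(k:ℝ)) • R.sroot j else 0) := by
            intro m
            by_cases hm : m = j
            · subst hm; simp [hcast]
            · simp [hm]
          rw [hγ₁]
          simp only [hsum]
          rw [Finset.sum_ite_eq' Finset.univ j, if_pos (Finset.mem_univ j)]
          module
        obtain ⟨γ, hγ, hle2⟩ := ih (w' * sj) (mul_mem hw' hjW) hstep hlen2 (sj γ') hmem
        exact ⟨γ, hγ, R.le_trans' hle hle2⟩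
      · exfalso
        push_neg at hk0
        have hαmem : R.sroot j ∈ R.N (w' * sj) := by
          refine ⟨R.sroot_pos j, ?_⟩
          have : (w' * sj) (R.sroot j) = -(w' (R.sroot j)) := by
            show w' (sj (R.sroot j)) = _
            rw [hsj, R.reflect_self hjΔ, map_neg]
          rw [this, neg_neg]
          exact hαpos
        have hδ₁ := R.step1 hsl r (w' * sj) (mul_mem hw' hjW) (hstep ▸ hlen2) (sj γ') hmem
        have hδ₂ := R.step1 hsl r (w' * sj) (mul_mem hw' hjW) (hstep ▸ hlen2) (R.sroot j) hαmem
        rw [← hstep] at hδ₁ hδ₂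
        have hcm := hcomm _ hδ₁ _ hδ₂
        rw [R.P_inv_inner] at hcm
        rw [hγ₁, inner_sub_left, real_inner_smul_left] at hcm
        have hk' : 2 * ⟪R.sroot j, γ'⟫ = (k:ℝ) * ⟪R.sroot j, R.sroot j⟫ := by
          have hs := hii.ne'
          field_simp at hk
          linarith
        have hcomm2 : ⟪γ', R.sroot j⟫ = ⟪R.sroot j, γ'⟫ := real_inner_comm _ _
        have hk1 : (1:ℝ) ≤ (k:ℝ) := by exact_mod_cast hk0
        nlinarith

end RSD


/-- If `w` is commutative (all pairs of roots in `N(w)` have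
nonnegative inner product) and `w'` is a left factor of `w`, then `N(w')` is located
below `N(w)`: every `γ' ∈ N(w')` satisfies `γ' ≼ γ` for some `γ ∈ N(w)`. -/
theorem left_factor_inversion_set_below
    {ι V : Type*} [Fintype ι] [NormedAddCommGroup V] [InnerProductSpace ℝ V]
    (R : RSD ι V) (hsl : R.SimplyLaced) (w w' w'' : V ≃ₗ[ℝ] V)
    (hw : w ∈ R.W) (hw' : w' ∈ R.W) (hw'' : w'' ∈ R.W)
    (hcomm : ∀ γ ∈ R.N w, ∀ γ' ∈ R.N w, 0 ≤ ⟪γ, γ'⟫)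
    (hfac : w = w' * w'') (hlen : R.len w = R.len w' + R.len w'') :
    ∀ γ' ∈ R.N w', ∃ γ ∈ R.N w, R.le γ' γ := by
  obtain ⟨t, hPt, hlent⟩ := R.exists_reduced hw''
  exact R.step2 hsl w hcomm t w' hw' (by rw [hfac, hPt]) (by rw [hlen, hlent])
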